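/- Let A be an m×n real matrix and B an n×p real matrix with AB = 0. Then ℝⁿ decomposes as the orthogonal direct sum ℝⁿ = im(Aᵀ) ⊕ im(B) ⊕ (ker A ∩ ker Bᵀ) (Hodge decomposition). -/

import Mathlib

open Matrix Finset

lemma euclid_inner_eq_dot (n : ℕ) (x y : EuclideanSpace ℝ (Fin n)) :
    inner (𝕜 := ℝ) x y = (x : Fin n → ℝ) ⬝ᵥ y := by
  simp [PiLp.inner_apply, dotProduct, RCLike.inner_apply, mul_comm]

/-- Hodge decomposition: if AB = 0 then ℝⁿ is the orthogonal direct sum of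
im Aᵀ, im B, and ker A ∩ ker Bᵀ. -/
theorem stmt_7 (m n p : ℕ) (A : Matrix (Fin m) (Fin n) ℝ) (B : Matrix (Fin n) (Fin p) ℝ)
    (hAB : A * B = 0) :
    (LinearMap.range (Aᵀ.mulVecLin) ⊔ LinearMap.range (B.mulVecLin) ⊔
        (LinearMap.ker (A.mulVecLin) ⊓ LinearMap.ker (Bᵀ.mulVecLin)) = ⊤) ∧
      (∀ x ∈ LinearMap.range (Aᵀ.mulVecLin), ∀ y ∈ LinearMap.range (B.mulVecLin),
        x ⬝ᵥ y = 0) ∧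
      (∀ x ∈ LinearMap.range (Aᵀ.mulVecLin),
        ∀ z ∈ LinearMap.ker (A.mulVecLin) ⊓ LinearMap.ker (Bᵀ.mulVecLin), x ⬝ᵥ z = 0) ∧
      (∀ y ∈ LinearMap.range (B.mulVecLin),
        ∀ z ∈ LinearMap.ker (A.mulVecLin) ⊓ LinearMap.ker (Bᵀ.mulVecLin), y ⬝ᵥ z = 0) := by
  refine ⟨?_, ?_, ?_, ?_⟩
  · -- the sup is everything
    let e := WithLp.linearEquiv 2 ℝ (Fin n → ℝ)
    let K : Submodule ℝ (EuclideanSpace ℝ (Fin n)) :=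
      (LinearMap.range (Aᵀ.mulVecLin) ⊔ LinearMap.range (B.mulVecLin)).comap e.toLinearMap
    have hKc : Kᗮ ≤
        (LinearMap.ker (A.mulVecLin) ⊓ LinearMap.ker (Bᵀ.mulVecLin) :
          Submodule ℝ (Fin n → ℝ)).comap e.toLinearMap := by
      intro z hz
      rw [Submodule.mem_orthogonal] at hz
      have hA : ∀ u, u ⬝ᵥ (A.mulVecLin (e z)) = 0 := by
        intro u
        have h := hz (e.symm (Aᵀ.mulVecLin u))
          (Submodule.mem_comap.mpr (by
            rw [LinearEquiv.coe_toLinearMap, LinearEquiv.apply_symm_apply]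
            exact Submodule.mem_sup_left (LinearMap.mem_range_self _ u)))
        rw [euclid_inner_eq_dot] at h
        rw [← h]
        simp [e, Matrix.mulVecLin_apply, Matrix.mulVec_transpose,
          ← Matrix.dotProduct_mulVec]
      have hB : ∀ v, v ⬝ᵥ (Bᵀ.mulVecLin (e z)) = 0 := by
        intro v
        have h := hz (e.symm (B.mulVecLin v))
          (Submodule.mem_comap.mpr (by
            rw [LinearEquiv.coe_toLinearMap, LinearEquiv.apply_symm_apply]
            exact Submodule.mem_sup_right (LinearMap.mem_range_self _ v)))
        rw [euclid_inner_eq_dot] at h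
        rw [← h]
        show v ⬝ᵥ (Bᵀ *ᵥ z.ofLp) = (B *ᵥ v) ⬝ᵥ z.ofLp
        rw [dotProduct_comm,
          Matrix.mulVec_transpose, ← Matrix.dotProduct_mulVec, dotProduct_comm]
      constructor
      · exact dotProduct_self_eq_zero.mp (hA (A.mulVecLin (e z)))
      · exact dotProduct_self_eq_zero.mp (hB (Bᵀ.mulVecLin (e z)))
    rw [eq_top_iff]
    intro x _
    have hx : e.symm x ∈ K ⊔ Kᗮ := by
      rw [Submodule.sup_orthogonal_of_hasOrthogonalProjection]; trivial
    obtain ⟨y, hy, w, hw, hyw⟩ := Submodule.mem_sup.mp (sup_le_sup_left hKc K hx)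
    rw [← e.apply_symm_apply x, ← hyw, map_add]
    exact add_mem (Submodule.mem_sup_left hy) (Submodule.mem_sup_right hw)
  · rintro x ⟨u, rfl⟩ y ⟨v, rfl⟩
    rw [Matrix.mulVecLin_apply, Matrix.mulVecLin_apply, Matrix.mulVec_transpose,
      ← Matrix.dotProduct_mulVec, Matrix.mulVec_mulVec, hAB, Matrix.zero_mulVec,
      dotProduct_zero]
  · rintro x ⟨u, rfl⟩ z ⟨hz1, hz2⟩
    have hz1' : A.mulVec z = 0 := hz1
    rw [Matrix.mulVecLin_apply, Matrix.mulVec_transpose, ← Matrix.dotProduct_mulVec,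
      hz1', dotProduct_zero]
  · rintro y ⟨v, rfl⟩ z ⟨hz1, hz2⟩
    have hz2' : Bᵀ.mulVec z = 0 := hz2
    rw [Matrix.mulVecLin_apply, dotProduct_comm, Matrix.dotProduct_mulVec,
      ← Matrix.mulVec_transpose, hz2', zero_dotProduct]
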